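/- Let A be a noetherian ring complete with respect to an ideal I, S a profinite set, and J ⊆ C(S,A) a closed ideal defining a closed formal subscheme of Spf C(S,A). Suppose every fiber ideal J_s := {f(s) : f ∈ J} ⊆ A is open in the I-adic topology (i.e., each fiber is a scheme). Then for every s ∈ S there is an open neighborhood U of s in S such that J_s ⊆ J_{s'} for all s' ∈ U. -/

import Mathlib

/-- Evaluation at a point, as a ring homomorphism `C(S,A) →+* A`. -/
def cEvalHom (S : Type*) [TopologicalSpace S]
    (A : Type*) [CommRing A] [TopologicalSpace A] [IsTopologicalRing A] (s : S) :
    C(S, A) →+* A where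
  toFun f := f s
  map_one' := rfl
  map_mul' _ _ := rfl
  map_zero' := rfl
  map_add' _ _ := rfl

lemma cEvalHom_surjective (S : Type*) [TopologicalSpace S]
    (A : Type*) [CommRing A] [TopologicalSpace A] [IsTopologicalRing A] (s : S) :
    Function.Surjective (cEvalHom S A s) :=
  fun a => ⟨ContinuousMap.const S a, rfl⟩

/-- Iteration lemma: if `I^n ≤ J' ⊔ I^(n+1)`, then `I^n ≤ J' ⊔ I^(n+k)` for all `k`. -/
lemma pow_le_sup_iterate {A : Type*} [CommRing A] (I J' : Ideal A) (n : ℕ)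
    (h : I ^ n ≤ J' ⊔ I ^ (n + 1)) : ∀ k : ℕ, I ^ n ≤ J' ⊔ I ^ (n + k) := by
  intro k
  induction k with
  | zero => exact le_sup_right
  | succ k ih =>
    refine ih.trans (sup_le le_sup_left ?_)
    have h1 : I ^ (n + k) = I ^ k * I ^ n := by ring
    have h2 : I ^ k * I ^ n ≤ I ^ k * (J' ⊔ I ^ (n + 1)) := Ideal.mul_mono_right h
    have h3 : I ^ k * (J' ⊔ I ^ (n + 1)) = I ^ k * J' ⊔ I ^ k * I ^ (n + 1) :=
      Ideal.mul_sup _ _ _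
    have h4 : I ^ k * I ^ (n + 1) = I ^ (n + (k + 1)) := by ring
    rw [h1]
    refine h2.trans ?_
    rw [h3, h4]
    exact sup_le ((Ideal.mul_le_right : I ^ k * J' ≤ J').trans le_sup_left) le_sup_right

/-- Let `A` be a noetherian ring complete with respect to an ideal `I` (with the `I`-adic
topology), `S` a profinite set, and `J ⊆ C(S,A)` a closed ideal (closedness expressed by
`J = ⋂ₙ (J + I^n·C(S,A))`).  Suppose every fiber ideal `J_s = {f(s) : f ∈ J}` is open in
the `I`-adic topology of `A`.  Then for every `s ∈ S` there is an open neighborhood `U` of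
`s` such that `J_s ⊆ J_{s'}` for all `s' ∈ U`. -/
theorem fiber_ideals_semicontinuous
    (A : Type*) [CommRing A] [IsNoetherianRing A] [TopologicalSpace A] [IsTopologicalRing A]
    (I : Ideal A) (hA : IsAdic I) [IsAdicComplete I A]
    (S : Type*) [TopologicalSpace S] [CompactSpace S] [T2Space S] [TotallyDisconnectedSpace S]
    (J : Ideal C(S, A))
    (hJclosed : ∀ g : C(S, A),
      (∀ n : ℕ, g ∈ J ⊔ Ideal.map (algebraMap A C(S, A)) (I ^ n)) → g ∈ J)
    (hJopen : ∀ s : S, ∃ n : ℕ, I ^ n ≤ Ideal.map (cEvalHom S A s) J) :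
    ∀ s : S, ∃ U : Set S, IsOpen U ∧ s ∈ U ∧
      ∀ s' ∈ U, Ideal.map (cEvalHom S A s) J ≤ Ideal.map (cEvalHom S A s') J := by
  intro s
  classical
  -- powers of I are open
  have hIopen : ∀ m : ℕ, IsOpen ((I ^ m : Ideal A) : Set A) := by
    rw [isAdic_iff] at hA
    exact hA.1
  obtain ⟨n, hn⟩ := hJopen s
  set Js := Ideal.map (cEvalHom S A s) J with hJs
  -- finite generating sets
  obtain ⟨T, hT⟩ : Js.FG := IsNoetherian.noetherian Js
  obtain ⟨B, hB⟩ : (I ^ n).FG := IsNoetherian.noetherian (I ^ n)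
  -- each generator lifts to an element of J
  have hlift : ∀ a ∈ (T ∪ B : Finset A), ∃ f ∈ J, f s = a := by
    intro a ha
    have haJs : a ∈ Js := by
      rcases Finset.mem_union.mp ha with h | h
      · rw [← hT]; exact Ideal.subset_span h
      · exact hn (by rw [← hB]; exact Ideal.subset_span h)
    exact (Ideal.mem_map_iff_of_surjective _ (cEvalHom_surjective S A s)).mp haJs
  choose! f hfJ hfs using hlift
  -- the neighborhood
  refine ⟨⋂ a ∈ (T ∪ B : Finset A), {s' | f a s' - a ∈ I ^ (n + 1)}, ?_, ?_, ?_⟩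
  · refine isOpen_biInter_finset fun a ha => ?_
    have : IsOpen ((fun x : A => x - a) ⁻¹' (I ^ (n + 1) : Ideal A)) :=
      (hIopen (n + 1)).preimage (continuous_id.sub continuous_const)
    exact this.preimage (f a).continuous
  · refine Set.mem_iInter₂.mpr fun a ha => ?_
    simp only [Set.mem_setOf_eq, hfs a ha, sub_self]
    exact Submodule.zero_mem _
  · intro s' hs'
    rw [Set.mem_iInter₂] at hs'
    set J' := Ideal.map (cEvalHom S A s') J with hJ'
    -- each generator a (of T or B) satisfies a ∈ J' ⊔ I^(n+1)
    have hgen : ∀ a ∈ (T ∪ B : Finset A), a ∈ J' ⊔ I ^ (n + 1) := by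
      intro a ha
      have h1 : f a s' ∈ J' := Ideal.mem_map_of_mem _ (hfJ a ha)
      have h2 : a - f a s' ∈ I ^ (n + 1) := by
        have h := hs' a ha
        simp only [Set.mem_setOf_eq] at h
        simpa using Submodule.neg_mem _ h
      have : a = f a s' + (a - f a s') := by ring
      rw [this]
      exact Submodule.add_mem_sup h1 h2
    -- I^n ≤ J' ⊔ I^(n+1)
    have hIn : I ^ n ≤ J' ⊔ I ^ (n + 1) := by
      rw [← hB, Ideal.span_le]
      intro a ha
      exact hgen a (Finset.mem_union_right _ ha)
    -- hence I^n ≤ J'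
    obtain ⟨n', hn'⟩ := hJopen s'
    have hInJ' : I ^ n ≤ J' := by
      have := pow_le_sup_iterate I J' n hIn n'
      refine this.trans (sup_le le_rfl ?_)
      exact (Ideal.pow_le_pow_right (by omega)).trans hn'
    -- conclude
    rw [← hT, Ideal.span_le]
    intro a ha
    have := hgen a (Finset.mem_union_left _ ha)
    rcases Submodule.mem_sup.mp this with ⟨y, hy, z, hz, hyz⟩
    rw [← hyz]
    exact Submodule.add_mem _ hy (hInJ' (Ideal.pow_le_pow_right (by omega) hz))
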